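/- Privacy profile of the one-dimensional Gaussian mechanism: for σ > 0 and shift Δ > 0, letting θ = Δ/σ, for all ε ≥ 0 one has D_{e^ε}(N(0,σ²) ‖ N(Δ,σ²)) = Φ(θ/2 − ε/θ) − e^ε Φ(−θ/2 − ε/θ), where Φ is the standard normal CDF. -/

import Mathlib

open Real

/-- Standard normal CDF `Φ(t) = (2π)^{-1/2} ∫_{-∞}^t e^{-r²/2} dr`. -/
noncomputable def stdNormalCDF (t : ℝ) : ℝ :=
  (Real.sqrt (2 * π))⁻¹ * ∫ r in Set.Iic t, exp (-r ^ 2 / 2)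

lemma setIntegral_Iic_comp_affine (g : ℝ → ℝ) (σ d t : ℝ) (hσ : 0 < σ) :
    ∫ z in Set.Iic (σ * t + d), g z = σ * ∫ r in Set.Iic t, g (σ * r + d) := by
  have himg : (fun r => σ * r + d) '' Set.Iic t = Set.Iic (σ * t + d) := by
    ext z
    simp only [Set.mem_image, Set.mem_Iic]
    constructor
    · rintro ⟨r, hr, rfl⟩; nlinarith
    · intro hz
      refine ⟨(z - d) / σ, ?_, ?_⟩
      · rw [div_le_iff₀ hσ]; nlinarith
      · field_simp; ring
  have hderiv : ∀ x ∈ Set.Iic t, HasDerivWithinAt (fun r => σ * r + d) σ (Set.Iic t) x := by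
    intro x _
    simpa using (((hasDerivAt_id x).const_mul σ).add_const d).hasDerivWithinAt (s := Set.Iic t)
  have hinj : Set.InjOn (fun r => σ * r + d) (Set.Iic t) := by
    intro a _ b _ hab
    simp only at hab
    nlinarith [hab]
  have h := MeasureTheory.integral_image_eq_integral_abs_deriv_smul measurableSet_Iic
    hderiv hinj g
  rw [himg] at h
  rw [h, ← MeasureTheory.integral_const_mul]
  congr 1 with r
  rw [abs_of_pos hσ, smul_eq_mul]

/-- Privacy profile of the Gaussian mechanism:
`D_{e^ε}(N(0,σ²) ‖ N(Δ,σ²)) = Φ(θ/2 - ε/θ) - e^ε Φ(-θ/2 - ε/θ)` with `θ = Δ/σ`. -/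
theorem gaussian_privacy_profile (σ Δ : ℝ) (hσ : 0 < σ) (hΔ : 0 < Δ)
    (ε : ℝ) (hε : 0 ≤ ε) :
    ∫ z : ℝ, max ((σ * Real.sqrt (2 * π))⁻¹ * exp (-z ^ 2 / (2 * σ ^ 2))
        - exp ε * ((σ * Real.sqrt (2 * π))⁻¹ * exp (-(z - Δ) ^ 2 / (2 * σ ^ 2)))) 0
      = stdNormalCDF ((Δ / σ) / 2 - ε / (Δ / σ))
        - exp ε * stdNormalCDF (-(Δ / σ) / 2 - ε / (Δ / σ)) := by
  set c : ℝ := Δ / 2 - σ ^ 2 * ε / Δ with hc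
  set C : ℝ := (σ * Real.sqrt (2 * π))⁻¹ with hC
  have hπ : (0:ℝ) < Real.sqrt (2 * π) := Real.sqrt_pos.mpr (by positivity)
  have hCpos : 0 < C := by rw [hC]; positivity
  have h2σ : (0:ℝ) < 2 * σ ^ 2 := by positivity
  -- the pointwise key
  have hiff : ∀ z : ℝ, (ε + -(z - Δ) ^ 2 / (2 * σ ^ 2) ≤ -z ^ 2 / (2 * σ ^ 2)) ↔ z ≤ c := by
    intro z
    rw [← sub_nonneg,
      show -z ^ 2 / (2 * σ ^ 2) - (ε + -(z - Δ) ^ 2 / (2 * σ ^ 2)) = (Δ / σ ^ 2) * (c - z) by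
        rw [hc]; field_simp; ring,
      mul_nonneg_iff_of_pos_left (by positivity), sub_nonneg]
  have hkey : ∀ z : ℝ, max (C * exp (-z ^ 2 / (2 * σ ^ 2))
      - exp ε * (C * exp (-(z - Δ) ^ 2 / (2 * σ ^ 2)))) 0
      = (Set.Iic c).indicator (fun z => C * exp (-z ^ 2 / (2 * σ ^ 2))
          - exp ε * (C * exp (-(z - Δ) ^ 2 / (2 * σ ^ 2)))) z := by
    intro z
    have hexp : exp ε * (C * exp (-(z - Δ) ^ 2 / (2 * σ ^ 2)))
        = C * exp (ε + -(z - Δ) ^ 2 / (2 * σ ^ 2)) := by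
      rw [Real.exp_add]; ring
    rcases le_or_gt z c with h | h
    · rw [Set.indicator_of_mem (Set.mem_Iic.mpr h), max_eq_left]
      rw [sub_nonneg, hexp]
      exact mul_le_mul_of_nonneg_left (Real.exp_le_exp.mpr ((hiff z).mpr h)) hCpos.le
    · rw [Set.indicator_of_notMem (by simpa using h.not_ge), max_eq_right]
      rw [sub_nonpos, hexp]
      refine mul_le_mul_of_nonneg_left (Real.exp_le_exp.mpr ?_) hCpos.le
      exact le_of_lt (lt_of_not_ge (fun hcon => h.not_ge ((hiff z).mp hcon)))
  -- integrability
  have hint1 : MeasureTheory.Integrable (fun z : ℝ => C * exp (-z ^ 2 / (2 * σ ^ 2))) := by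
    have : MeasureTheory.Integrable (fun z : ℝ => exp (-(1 / (2 * σ ^ 2)) * z ^ 2)) :=
      integrable_exp_neg_mul_sq (by positivity)
    refine (this.const_mul C).congr ?_
    filter_upwards with z
    congr 2
    ring
  have hint2 : MeasureTheory.Integrable
      (fun z : ℝ => exp ε * (C * exp (-(z - Δ) ^ 2 / (2 * σ ^ 2)))) := by
    have := (hint1.comp_sub_right Δ).const_mul (exp ε)
    simpa using this
  -- rewrite as set integral
  rw [show (fun z : ℝ => max (C * exp (-z ^ 2 / (2 * σ ^ 2))
      - exp ε * (C * exp (-(z - Δ) ^ 2 / (2 * σ ^ 2)))) 0) = fun z =>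
      (Set.Iic c).indicator (fun z => C * exp (-z ^ 2 / (2 * σ ^ 2))
          - exp ε * (C * exp (-(z - Δ) ^ 2 / (2 * σ ^ 2)))) z from funext hkey,
    MeasureTheory.integral_indicator measurableSet_Iic,
    MeasureTheory.integral_sub hint1.integrableOn hint2.integrableOn]
  -- compute each Gaussian tail
  have hA : ∫ z in Set.Iic c, C * exp (-z ^ 2 / (2 * σ ^ 2)) = stdNormalCDF (c / σ) := by
    have := setIntegral_Iic_comp_affine (fun z => C * exp (-z ^ 2 / (2 * σ ^ 2))) σ 0 (c / σ) hσ
    rw [show σ * (c / σ) + 0 = c by field_simp; ring] at this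
    rw [this, stdNormalCDF, ← MeasureTheory.integral_const_mul, ← MeasureTheory.integral_const_mul]
    congr 1 with r
    rw [show -(σ * r + 0) ^ 2 / (2 * σ ^ 2) = -r ^ 2 / 2 by field_simp; ring, hC]
    field_simp
  have hB : ∫ z in Set.Iic c, C * exp (-(z - Δ) ^ 2 / (2 * σ ^ 2))
      = stdNormalCDF ((c - Δ) / σ) := by
    have := setIntegral_Iic_comp_affine (fun z => C * exp (-(z - Δ) ^ 2 / (2 * σ ^ 2))) σ Δ
      ((c - Δ) / σ) hσ
    rw [show σ * ((c - Δ) / σ) + Δ = c by field_simp; ring] at this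
    rw [this, stdNormalCDF, ← MeasureTheory.integral_const_mul, ← MeasureTheory.integral_const_mul]
    congr 1 with r
    rw [show -(σ * r + Δ - Δ) ^ 2 / (2 * σ ^ 2) = -r ^ 2 / 2 by field_simp; ring, hC]
    field_simp
  have hB2 : ∫ z in Set.Iic c, exp ε * (C * exp (-(z - Δ) ^ 2 / (2 * σ ^ 2)))
      = exp ε * stdNormalCDF ((c - Δ) / σ) := by
    rw [MeasureTheory.integral_const_mul, hB]
  rw [hA, hB2,
    show c / σ = (Δ / σ) / 2 - ε / (Δ / σ) by rw [hc]; field_simp,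
    show (c - Δ) / σ = -(Δ / σ) / 2 - ε / (Δ / σ) by rw [hc]; field_simp; ring]
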